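/- For all n ≥ 1, p(n+1) equals (n+1) plus the number of integers i with 1 ≤ i ≤ n such that i appears in {p(1), p(2), ..., p(n)}. -/
import Mathlib

open Finset

namespace Wythoff8

def Hyp (p q : ℕ → ℕ) : Prop :=
  p 1 = 1 ∧ (∀ n, 1 ≤ n → q n = p n + n) ∧
  ∀ n, 1 ≤ n →
    IsLeast {m : ℕ | 0 < m ∧ ∀ i, 1 ≤ i → i ≤ n → m ≠ p i ∧ m ≠ q i} (p (n + 1))

variable {p q : ℕ → ℕ}

theorem p_succ_lt (h : Hyp p q) : ∀ n, 1 ≤ n → p n < p (n + 1) := by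
  obtain ⟨hp1, hq, hmin⟩ := h
  intro n hn
  have hmem := (hmin n hn).1
  have hne : p (n + 1) ≠ p n := (hmem.2 n hn le_rfl).1
  rcases eq_or_lt_of_le hn with h1 | h2
  · have hpos : 0 < p (n + 1) := hmem.1
    have hn1 : p n = 1 := by rw [← h1, hp1]
    omega
  · have hm : 1 ≤ n - 1 := by omega
    have hsub : p (n - 1 + 1) ≤ p (n + 1) :=
      (hmin (n - 1) hm).2 ⟨hmem.1, fun i hi him => hmem.2 i hi (by omega)⟩
    have e : n - 1 + 1 = n := by omega
    rw [e] at hsub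
    exact lt_of_le_of_ne hsub (Ne.symm hne)

theorem p_lt_p (h : Hyp p q) : ∀ i j, 1 ≤ i → i < j → p i < p j := by
  intro i j hi hij
  induction j with
  | zero => omega
  | succ k ih =>
    rcases Nat.lt_or_ge i k with h' | h'
    · exact lt_trans (ih h') (p_succ_lt h k (by omega))
    · have : i = k := by omega
      subst this
      exact p_succ_lt h i hi

theorem p_le (h : Hyp p q) : ∀ i j, 1 ≤ i → i ≤ j → p i ≤ p j := by
  intro i j hi hij
  rcases eq_or_lt_of_le hij with h1 | h2
  · rw [h1]
  · exact le_of_lt (p_lt_p h i j hi h2)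

theorem le_p (h : Hyp p q) : ∀ i, 1 ≤ i → i ≤ p i := by
  intro i hi
  induction i with
  | zero => omega
  | succ k ih =>
    rcases Nat.eq_or_lt_of_le hi with h1 | h1
    · have : k = 0 := by omega
      subst this
      simp [h.1]
    · have hk : 1 ≤ k := by omega
      have h2 := p_succ_lt h k hk
      have h3 := ih hk
      omega

theorem p_pos (h : Hyp p q) : ∀ i, 1 ≤ i → 1 ≤ p i := by
  intro i hi
  exact le_trans hi (le_p h i hi)

theorem p_inj (h : Hyp p q) : ∀ i j, 1 ≤ i → 1 ≤ j → p i = p j → i = j := by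
  intro i j hi hj e
  rcases lt_trichotomy i j with h1 | h1 | h1
  · exact absurd e (ne_of_lt (p_lt_p h i j hi h1))
  · exact h1
  · exact absurd e.symm (ne_of_lt (p_lt_p h j i hj h1))

theorem q_lt_q (h : Hyp p q) : ∀ i j, 1 ≤ i → i < j → q i < q j := by
  intro i j hi hij
  have e1 : q i = p i + i := h.2.1 i hi
  have e2 : q j = p j + j := h.2.1 j (by omega)
  have := p_le h i j hi (le_of_lt hij)
  omega

theorem q_inj (h : Hyp p q) : ∀ i j, 1 ≤ i → 1 ≤ j → q i = q j → i = j := by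
  intro i j hi hj e
  rcases lt_trichotomy i j with h1 | h1 | h1
  · exact absurd e (ne_of_lt (q_lt_q h i j hi h1))
  · exact h1
  · exact absurd e.symm (ne_of_lt (q_lt_q h j i hj h1))

theorem pq_ne (h : Hyp p q) : ∀ i j, 1 ≤ i → 1 ≤ j → p i ≠ q j := by
  intro i j hi hj
  rcases le_or_gt i j with hij | hij
  · have h1 : p i ≤ p j := p_le h i j hi hij
    have h2 : q j = p j + j := h.2.1 j hj
    omega
  · have hi1 : 1 ≤ i - 1 := by omega
    have := ((h.2.2 (i - 1) hi1).1.2 j hj (by omega)).2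
    have e : i - 1 + 1 = i := by omega
    rw [e] at this
    exact this

theorem cover (h : Hyp p q) : ∀ m, 1 ≤ m → ∃ i, 1 ≤ i ∧ i ≤ m ∧ (p i = m ∨ q i = m) := by
  intro m hm
  by_contra hc
  push_neg at hc
  have hmem : m ∈ {m : ℕ | 0 < m ∧ ∀ i, 1 ≤ i → i ≤ m → m ≠ p i ∧ m ≠ q i} := by
    refine ⟨hm, fun i hi him => ?_⟩
    have := hc i hi him
    exact ⟨fun e => this.1 e.symm, fun e => this.2 e.symm⟩
  have hle : p (m + 1) ≤ m := (h.2.2 m hm).2 hmem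
  have := le_p h (m + 1) (by omega)
  omega

theorem count (h : Hyp p q) (N : ℕ) :
    ((Icc 1 N).filter (fun i => p i ≤ N)).card
      + ((Icc 1 N).filter (fun i => q i ≤ N)).card = N := by
  classical
  set A := (Icc 1 N).filter (fun i => p i ≤ N) with hA
  set B := (Icc 1 N).filter (fun i => q i ≤ N) with hB
  have hU : A.image p ∪ B.image q = Icc 1 N := by
    apply Finset.Subset.antisymm
    · intro m hm
      simp only [hA, hB, mem_union, mem_image, mem_filter, mem_Icc] at hm
      rcases hm with ⟨i, ⟨⟨hi1, _⟩, hle⟩, rfl⟩ | ⟨i, ⟨⟨hi1, _⟩, hle⟩, rfl⟩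
      · exact mem_Icc.2 ⟨p_pos h i hi1, hle⟩
      · have : q i = p i + i := h.2.1 i hi1
        exact mem_Icc.2 ⟨by omega, hle⟩
    · intro m hm
      rw [mem_Icc] at hm
      obtain ⟨i, hi1, him, hpq⟩ := cover h m hm.1
      rcases hpq with e | e
      · apply mem_union_left
        refine mem_image.2 ⟨i, ?_, e⟩
        simp only [hA, mem_filter, mem_Icc]
        exact ⟨⟨hi1, le_trans him hm.2⟩, by omega⟩
      · apply mem_union_right
        refine mem_image.2 ⟨i, ?_, e⟩
        simp only [hB, mem_filter, mem_Icc]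
        exact ⟨⟨hi1, le_trans him hm.2⟩, by omega⟩
  have hAi : ∀ i ∈ A, 1 ≤ i := by
    intro i hi
    simp only [hA, mem_filter, mem_Icc] at hi
    exact hi.1.1
  have hBi : ∀ i ∈ B, 1 ≤ i := by
    intro i hi
    simp only [hB, mem_filter, mem_Icc] at hi
    exact hi.1.1
  have hdisj : Disjoint (A.image p) (B.image q) := by
    rw [Finset.disjoint_left]
    intro m hm1 hm2
    obtain ⟨i, hi, rfl⟩ := mem_image.1 hm1
    obtain ⟨j, hj, e⟩ := mem_image.1 hm2
    exact pq_ne h i j (hAi i hi) (hBi j hj) e.symm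
  have hcards := Finset.card_union_of_disjoint hdisj
  rw [hU] at hcards
  rw [Finset.card_image_of_injOn (fun i hi j hj e => p_inj h i j (hAi i hi) (hAi j hj) e),
    Finset.card_image_of_injOn (fun i hi j hj e => q_inj h i j (hBi i hi) (hBi j hj) e)]
    at hcards
  rw [Nat.card_Icc] at hcards
  omega

theorem countq_q (h : Hyp p q) (j : ℕ) (hj : 1 ≤ j) :
    ((Icc 1 (q j)).filter (fun i => q i ≤ q j)).card = j := by
  have hqj : j ≤ q j := by
    have := h.2.1 j hj
    have := le_p h j hj
    omega
  have he : (Icc 1 (q j)).filter (fun i => q i ≤ q j) = Icc 1 j := by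
    ext i
    simp only [mem_filter, mem_Icc]
    constructor
    · rintro ⟨⟨hi1, _⟩, hle⟩
      refine ⟨hi1, ?_⟩
      by_contra hlt
      push_neg at hlt
      exact absurd hle (not_le.2 (q_lt_q h j i hj hlt))
    · rintro ⟨hi1, hij⟩
      have h1 : q i ≤ q j := by
        rcases eq_or_lt_of_le hij with e | e
        · rw [e]
        · exact le_of_lt (q_lt_q h i j hi1 e)
      have h2 : i ≤ q i := by
        have := h.2.1 i hi1
        omega
      exact ⟨⟨hi1, by omega⟩, h1⟩
  rw [he, Nat.card_Icc]
  omega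

theorem countp_qj (h : Hyp p q) (j : ℕ) (hj : 1 ≤ j) :
    ((Icc 1 (q j)).filter (fun i => p i ≤ q j)).card = p j := by
  have h1 := count h (q j)
  have h2 := countq_q h j hj
  have h3 : q j = p j + j := h.2.1 j hj
  omega

theorem bracket (h : Hyp p q) (j : ℕ) (hj : 1 ≤ j) :
    p (p j) ≤ q j ∧ q j < p (p j + 1) := by
  have hpj : 1 ≤ p j := p_pos h j hj
  have hpcnt := countp_qj h j hj
  constructor
  · by_contra hc
    push_neg at hc
    have hsub : (Icc 1 (q j)).filter (fun i => p i ≤ q j) ⊆ Icc 1 (p j - 1) := by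
      intro i hi
      simp only [mem_filter, mem_Icc] at hi ⊢
      refine ⟨hi.1.1, ?_⟩
      by_contra hgt
      push_neg at hgt
      have : p (p j) ≤ p i := p_le h (p j) i hpj (by omega)
      omega
    have hcard := Finset.card_le_card hsub
    rw [hpcnt, Nat.card_Icc] at hcard
    omega
  · by_contra hc
    push_neg at hc
    have hsub : Icc 1 (p j + 1) ⊆ (Icc 1 (q j)).filter (fun i => p i ≤ q j) := by
      intro i hi
      simp only [mem_filter, mem_Icc] at hi ⊢
      have hple : p i ≤ p (p j + 1) := p_le h i (p j + 1) hi.1 hi.2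
      have hip : i ≤ p i := le_p h i hi.1
      exact ⟨⟨hi.1, by omega⟩, by omega⟩
    have hcard := Finset.card_le_card hsub
    rw [hpcnt, Nat.card_Icc] at hcard
    omega

theorem q_lt_iff (h : Hyp p q) (j n : ℕ) (hj : 1 ≤ j) (hn : 1 ≤ n) :
    q j < p (n + 1) ↔ p j ≤ n := by
  obtain ⟨h1, h2⟩ := bracket h j hj
  have hpj : 1 ≤ p j := p_pos h j hj
  constructor
  · intro hlt
    by_contra hc
    push_neg at hc
    have : p (n + 1) ≤ p (p j) := p_le h (n + 1) (p j) (by omega) (by omega)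
    omega
  · intro hle
    have : p (p j + 1) ≤ p (n + 1) := p_le h (p j + 1) (n + 1) (by omega) (by omega)
    omega

theorem main (h : Hyp p q) (n : ℕ) (hn : 1 ≤ n) :
    p (n + 1) = (n + 1) + ((Icc 1 n).filter (fun i => p i ≤ n)).card := by
  have hP : n + 1 ≤ p (n + 1) := le_p h (n + 1) (by omega)
  set M := p (n + 1) - 1 with hM
  have hM1 : p (n + 1) = M + 1 := by omega
  have hcnt := count h M
  have hA : (Icc 1 M).filter (fun i => p i ≤ M) = Icc 1 n := by
    ext i
    simp only [mem_filter, mem_Icc]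
    constructor
    · rintro ⟨⟨hi1, _⟩, hle⟩
      refine ⟨hi1, ?_⟩
      by_contra hc
      push_neg at hc
      have := p_le h (n + 1) i (by omega) (by omega)
      omega
    · rintro ⟨hi1, hin⟩
      have h1 : p i < p (n + 1) := p_lt_p h i (n + 1) hi1 (by omega)
      have h2 : i ≤ p i := le_p h i hi1
      exact ⟨⟨hi1, by omega⟩, by omega⟩
  have hB : (Icc 1 M).filter (fun i => q i ≤ M) = (Icc 1 n).filter (fun i => p i ≤ n) := by
    ext i
    simp only [mem_filter, mem_Icc]
    constructor
    · rintro ⟨⟨hi1, _⟩, hle⟩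
      have hq1 : q i < p (n + 1) := by omega
      have hpn : p i ≤ n := (q_lt_iff h i n hi1 hn).1 hq1
      have := le_p h i hi1
      exact ⟨⟨hi1, by omega⟩, hpn⟩
    · rintro ⟨⟨hi1, _⟩, hpn⟩
      have hq1 : q i < p (n + 1) := (q_lt_iff h i n hi1 hn).2 hpn
      have hqi : i ≤ q i := by
        have := h.2.1 i hi1
        omega
      exact ⟨⟨hi1, by omega⟩, by omega⟩
  rw [hA, hB, Nat.card_Icc] at hcnt
  omega

theorem rhs_eq (h : Hyp p q) (n : ℕ) (hn : 1 ≤ n) :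
    ((Icc 1 n).filter (fun m => m ∈ (Icc 1 n).image p)).card
      = ((Icc 1 n).filter (fun i => p i ≤ n)).card := by
  classical
  have he : (Icc 1 n).filter (fun m => m ∈ (Icc 1 n).image p)
      = ((Icc 1 n).filter (fun i => p i ≤ n)).image p := by
    ext m
    simp only [mem_filter, mem_Icc, mem_image]
    constructor
    · rintro ⟨⟨hm1, hm2⟩, i, hi, e⟩
      exact ⟨i, ⟨⟨hi.1, hi.2⟩, by omega⟩, e⟩
    · rintro ⟨i, ⟨⟨hi1, hi2⟩, hle⟩, rfl⟩
      exact ⟨⟨p_pos h i hi1, hle⟩, i, ⟨hi1, hi2⟩, rfl⟩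
  rw [he]
  apply Finset.card_image_of_injOn
  intro i hi j hj e
  rw [Finset.mem_coe, mem_filter, mem_Icc] at hi hj
  exact p_inj h i j hi.1.1 hj.1.1 e

end Wythoff8

/-- Wythoff sequences: `p 1 = 1`, `q n = p n + n` for `n ≥ 1`, and `p (n+1)` is the
smallest positive integer not contained in `U_n = {p 1, …, p n, q 1, …, q n}`. -/

theorem stmt_8 (p q : ℕ → ℕ)
    (hp1 : p 1 = 1)
    (hq : ∀ n, 1 ≤ n → q n = p n + n)
    (hmin : ∀ n, 1 ≤ n →
      IsLeast {m : ℕ | 0 < m ∧ ∀ i, 1 ≤ i → i ≤ n → m ≠ p i ∧ m ≠ q i} (p (n + 1))) :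
    ∀ n, 1 ≤ n →
      p (n + 1) = (n + 1) + ((Finset.Icc 1 n).filter
        (fun i => i ∈ (Finset.Icc 1 n).image p)).card := by
  intro n hn
  have h : Wythoff8.Hyp p q := ⟨hp1, hq, hmin⟩
  rw [Wythoff8.rhs_eq h n hn]
  exact Wythoff8.main h n hn
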